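/- arXiv:1305.6196 — 2 statements merged into one kernel-verified Lean document; each statement's English description precedes it below -/
import Mathlib

section
/- Let T be a starlike tree on n vertices with maximum degree Δ ≥ 3, i.e., exactly one vertex of T has degree greater than 2, and that vertex has degree Δ. Then TW(T) = (n-1)(Δ-1). -/
open Finset

/-- The pendent vertices of a graph: the vertices of degree 1. -/
def pendentFinset {V : Type*} [Fintype V] (G : SimpleGraph V) [DecidableRel G.Adj] : Finset V :=
  univ.filter (fun v => G.degree v = 1)

/-- The terminal Wiener index of a graph: the sum of the distances over all unordered pairs of
pendent vertices, i.e. half of the sum over all ordered pairs of pendent vertices. -/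
noncomputable def terminalWienerIndex {V : Type*} [Fintype V] (G : SimpleGraph V)
    [DecidableRel G.Adj] : ℕ :=
  (∑ u ∈ pendentFinset G, ∑ v ∈ pendentFinset G, G.dist u v) / 2

namespace StarlikeAux

open SimpleGraph Walk

variable {V : Type*} [DecidableEq V]

lemma path_length_eq_dist {T : SimpleGraph V} (hT : T.IsTree) {u v : V}
    (p : T.Walk u v) (hp : p.IsPath) : p.length = T.dist u v := by
  obtain ⟨w, hw⟩ := (hT.isConnected u v).exists_walk_length_eq_dist
  have he : p = w.bypass := (hT.existsUnique_path u v).unique hp w.bypass_isPath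
  refine le_antisymm ?_ (SimpleGraph.dist_le p)
  calc p.length = w.bypass.length := by rw [he]
    _ ≤ w.length := w.length_bypass_le
    _ = T.dist u v := hw

/-- The unique path between two vertices of a tree. -/
noncomputable def treePath {T : SimpleGraph V} (hT : T.IsTree) (a b : V) : T.Walk a b :=
  (hT.existsUnique_path a b).exists.choose

lemma treePath_isPath {T : SimpleGraph V} (hT : T.IsTree) (a b : V) :
    (treePath hT a b).IsPath :=
  (hT.existsUnique_path a b).exists.choose_spec

lemma treePath_eq {T : SimpleGraph V} (hT : T.IsTree) {a b : V} (p : T.Walk a b)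
    (hp : p.IsPath) : p = treePath hT a b :=
  (hT.existsUnique_path a b).unique hp (treePath_isPath hT a b)

lemma exists_entry {T : SimpleGraph V} {x y : V} {P : T.Walk x y} :
    ∀ {a b : V} (Q : T.Walk a b), a ∉ P.support → b ∈ P.support →
      ∃ z w, z ∉ P.support ∧ w ∈ P.support ∧ T.Adj z w
  | _, _, SimpleGraph.Walk.nil, ha, hb => absurd hb ha
  | a, b, @SimpleGraph.Walk.cons _ _ _ c' _ h q, ha, hb =>
    if h' : c' ∈ P.support then ⟨a, c', ha, h', h⟩
    else exists_entry q h' hb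

lemma exists_adj_mem {T : SimpleGraph V} {a b : V} (p : T.Walk a b) (hab : a ≠ b) :
    ∃ x, T.Adj a x ∧ x ∈ p.support.tail := by
  obtain ⟨x, h, q, rfl⟩ := Walk.exists_eq_cons_of_ne hab p
  exact ⟨x, h, by simp⟩

lemma two_le_degree_start [Fintype V] {T : SimpleGraph V} [DecidableRel T.Adj]
    {u v z : V} (p : T.Walk u v) (huv : u ≠ v) (hz : z ∉ p.support) (hadj : T.Adj z u) :
    2 ≤ T.degree u := by
  classical
  obtain ⟨x, hx, hxm⟩ := exists_adj_mem p huv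
  have hxz : z ≠ x := fun h => hz (h ▸ List.tail_subset _ hxm)
  have hsub : ({z, x} : Finset V) ⊆ T.neighborFinset u := by
    intro w hw
    rcases Finset.mem_insert.mp hw with rfl | hw
    · exact (T.mem_neighborFinset u w).2 hadj.symm
    · rw [Finset.mem_singleton] at hw
      exact hw ▸ (T.mem_neighborFinset u x).2 hx
  calc 2 = ({z, x} : Finset V).card := (Finset.card_pair hxz).symm
    _ ≤ (T.neighborFinset u).card := Finset.card_le_card hsub
    _ = T.degree u := rfl

lemma two_lt_degree_internal [Fintype V] {T : SimpleGraph V} [DecidableRel T.Adj]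
    {u v y z : V} {p : T.Walk u v} (hp : p.IsPath) (hy : y ∈ p.support)
    (hyu : y ≠ u) (hyv : y ≠ v) (hz : z ∉ p.support) (hadj : T.Adj z y) :
    2 < T.degree y := by
  classical
  have hnd : ((p.takeUntil y hy).support ++ (p.dropUntil y hy).support.tail).Nodup := by
    rw [← Walk.support_append, p.take_spec hy]; exact hp.support_nodup
  have hdisj := (List.nodup_append'.mp hnd).2.2
  obtain ⟨a, ha, ham⟩ := exists_adj_mem (p.takeUntil y hy).reverse hyu
  have ham' : a ∈ (p.takeUntil y hy).support := by
    have := List.tail_subset _ ham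
    rw [Walk.support_reverse, List.mem_reverse] at this
    exact this
  obtain ⟨b, hb, hbm⟩ := exists_adj_mem (p.dropUntil y hy) hyv
  have hab : a ≠ b := fun h => hdisj ham' (h ▸ hbm)
  have hap : a ∈ p.support := p.support_takeUntil_subset hy ham'
  have hbp : b ∈ p.support :=
    p.support_dropUntil_subset hy (List.tail_subset _ hbm)
  have haz : a ≠ z := fun h => hz (h ▸ hap)
  have hbz : b ≠ z := fun h => hz (h ▸ hbp)
  have hsub : ({a, b, z} : Finset V) ⊆ T.neighborFinset y := by
    intro w hw
    rcases Finset.mem_insert.mp hw with rfl | hw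
    · exact (T.mem_neighborFinset y w).2 ha
    rcases Finset.mem_insert.mp hw with rfl | hw
    · exact (T.mem_neighborFinset y w).2 hb
    · rw [Finset.mem_singleton] at hw
      exact hw ▸ (T.mem_neighborFinset y z).2 hadj.symm
  have hcard : ({a, b, z} : Finset V).card = 3 := by
    rw [Finset.card_insert_of_notMem (by simp [hab, haz]),
      Finset.card_insert_of_notMem (by simp [hbz]), Finset.card_singleton]
  calc 2 < ({a, b, z} : Finset V).card := by omega
    _ ≤ (T.neighborFinset y).card := Finset.card_le_card hsub
    _ = T.degree y := rfl

lemma center_mem [Fintype V] {T : SimpleGraph V} [DecidableRel T.Adj] (hT : T.IsTree) {c : V}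
    (huniq : ∀ v, 2 < T.degree v → v = c) {u v : V} (hu : T.degree u = 1)
    (hv : T.degree v = 1) (huv : u ≠ v) {p : T.Walk u v} (hp : p.IsPath) :
    c ∈ p.support := by
  by_contra hc
  obtain ⟨Q⟩ := hT.isConnected c u
  obtain ⟨z, w, hzn, hwm, hzw⟩ := exists_entry Q hc p.start_mem_support
  rcases eq_or_ne w u with rfl | hwu
  · have := two_le_degree_start p huv hzn hzw; omega
  rcases eq_or_ne w v with rfl | hwv
  · have := two_le_degree_start p.reverse huv.symm
      (by rwa [Walk.support_reverse, List.mem_reverse]) hzw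
    omega
  · have h3 := two_lt_degree_internal hp hwm hwu hwv hzn hzw
    exact hc (huniq w h3 ▸ hwm)

lemma dist_add_of_mem {T : SimpleGraph V} (hT : T.IsTree) {u v w : V} {p : T.Walk u v}
    (hp : p.IsPath) (hw : w ∈ p.support) :
    T.dist u w + T.dist w v = T.dist u v := by
  have h1 := path_length_eq_dist hT _ (hp.takeUntil hw)
  have h2 := path_length_eq_dist hT _ (hp.dropUntil hw)
  have h3 := path_length_eq_dist hT p hp
  have h4 := congrArg Walk.length (p.take_spec hw)
  rw [Walk.length_append] at h4
  omega

lemma exists_leaf_through [Fintype V] {T : SimpleGraph V} [DecidableRel T.Adj]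
    (hT : T.IsTree) {c : V} (hdeg2 : ∀ v : V, v ≠ c → T.degree v ≤ 2)
    (hdeg1 : ∀ v : V, v ≠ c → 1 ≤ T.degree v) :
    ∀ (N : ℕ) (v : V), v ≠ c → Fintype.card V - T.dist c v ≤ N →
      ∃ u, T.degree u = 1 ∧ v ∈ (treePath hT c u).support := by
  intro N
  induction N with
  | zero =>
    intro v hvc hle
    exfalso
    have hlt : T.dist c v < Fintype.card V := by
      have h1 := (treePath_isPath hT c v).length_lt
      rw [path_length_eq_dist hT _ (treePath_isPath hT c v)] at h1
      exact h1
    omega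
  | succ N ih =>
    intro v hvc hle
    by_cases hleaf : T.degree v = 1
    · exact ⟨v, hleaf, Walk.end_mem_support _⟩
    have hdv : T.degree v = 2 := by
      have := hdeg2 v hvc; have := hdeg1 v hvc; omega
    have hQp : (treePath hT c v).IsPath := treePath_isPath hT c v
    have hQlen : (treePath hT c v).length = T.dist c v := path_length_eq_dist hT _ hQp
    obtain ⟨p0, hp0adj, R, hRdef⟩ := Walk.exists_eq_cons_of_ne hvc (treePath hT c v).reverse
    have hcard : (T.neighborFinset v).card = 2 := hdv
    obtain ⟨w, hwin, hwp0⟩ : ∃ w ∈ T.neighborFinset v, w ≠ p0 := by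
      by_contra h
      push_neg at h
      have hsub : T.neighborFinset v ⊆ {p0} := fun x hx => Finset.mem_singleton.2 (h x hx)
      have := Finset.card_le_card hsub
      rw [Finset.card_singleton] at this
      omega
    have hwadj : T.Adj v w := (T.mem_neighborFinset v w).1 hwin
    have hwv : w ≠ v := fun h => T.irrefl (h ▸ hwadj)
    have hwQ : w ∉ (treePath hT c v).support := by
      intro hwQ
      have hR'p : ((treePath hT c v).takeUntil w hwQ).IsPath := hQp.takeUntil hwQ
      have hvR' : v ∉ ((treePath hT c v).takeUntil w hwQ).support := by
        have hnd : (((treePath hT c v).takeUntil w hwQ).support ++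
            ((treePath hT c v).dropUntil w hwQ).support.tail).Nodup := by
          rw [← Walk.support_append, Walk.take_spec]; exact hQp.support_nodup
        have hdisj := (List.nodup_append'.mp hnd).2.2
        intro hvR'
        exact hdisj hvR'
          (Walk.end_mem_tail_support_of_ne hwv ((treePath hT c v).dropUntil w hwQ))
      have hN'p : (((treePath hT c v).takeUntil w hwQ).concat hwadj.symm).IsPath := by
        rw [← Walk.isPath_reverse_iff, Walk.reverse_concat]
        exact ((Walk.cons_isPath_iff _ _).2 ⟨(Walk.isPath_reverse_iff _).2 hR'p,
          by rwa [Walk.support_reverse, List.mem_reverse]⟩)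
      have hN'eq : ((treePath hT c v).takeUntil w hwQ).concat hwadj.symm = treePath hT c v :=
        treePath_eq hT _ hN'p
      have hsupp : (((treePath hT c v).takeUntil w hwQ).concat hwadj.symm).reverse.support
          = (treePath hT c v).reverse.support := by rw [hN'eq]
      rw [Walk.reverse_concat, hRdef] at hsupp
      simp only [Walk.support_cons] at hsupp
      have h2 : ((treePath hT c v).takeUntil w hwQ).reverse.support = R.support :=
        (List.cons_eq_cons.mp hsupp).2
      have e1 : R.support = w :: ((treePath hT c v).takeUntil w hwQ).reverse.support.tail := by
        rw [← h2]; exact Walk.support_eq_cons _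
      rw [Walk.support_eq_cons R] at e1
      exact hwp0 (List.cons_eq_cons.mp e1).1.symm
    have hNp : ((treePath hT c v).concat hwadj).IsPath := by
      rw [← Walk.isPath_reverse_iff, Walk.reverse_concat]
      exact ((Walk.cons_isPath_iff _ _).2 ⟨(Walk.isPath_reverse_iff _).2 hQp,
        by rwa [Walk.support_reverse, List.mem_reverse]⟩)
    have hwc : w ≠ c := fun h => hwQ (h ▸ (treePath hT c v).start_mem_support)
    have hNeq : treePath hT c w = (treePath hT c v).concat hwadj :=
      (treePath_eq hT _ hNp).symm
    have hdw : T.dist c w = T.dist c v + 1 := by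
      have hl := path_length_eq_dist hT _ hNp
      rw [Walk.length_concat] at hl
      omega
    obtain ⟨u, hu1, hwu⟩ := ih w hwc (by omega)
    have hPu := treePath_isPath hT c u
    have htake : (treePath hT c u).takeUntil w hwu = (treePath hT c v).concat hwadj :=
      (treePath_eq hT _ (hPu.takeUntil hwu)).trans hNeq
    refine ⟨u, hu1, ?_⟩
    have hvN : v ∈ ((treePath hT c v).concat hwadj).support := by
      rw [Walk.support_concat, List.mem_append]
      exact Or.inl (Walk.end_mem_support _)
    rw [← htake] at hvN
    exact (treePath hT c u).support_takeUntil_subset hwu hvN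

lemma leaf_unique [Fintype V] {T : SimpleGraph V} [DecidableRel T.Adj] (hT : T.IsTree) {c : V}
    (huniq : ∀ v, 2 < T.degree v → v = c) {v u1 u2 : V} (hvc : v ≠ c)
    (h1 : T.degree u1 = 1) (h2 : T.degree u2 = 1)
    (m1 : v ∈ (treePath hT c u1).support) (m2 : v ∈ (treePath hT c u2).support) :
    u1 = u2 := by
  by_contra hne
  have key : ∀ (u : V) (m : v ∈ (treePath hT c u).support),
      c ∉ ((treePath hT c u).dropUntil v m).support := by
    intro u m hcm
    have hP := treePath_isPath hT c u
    have hnd : (((treePath hT c u).takeUntil v m).support ++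
        ((treePath hT c u).dropUntil v m).support.tail).Nodup := by
      rw [← Walk.support_append, Walk.take_spec]; exact hP.support_nodup
    have hdisj := (List.nodup_append'.mp hnd).2.2
    rw [Walk.support_eq_cons] at hcm
    rcases List.mem_cons.mp hcm with h | h
    · exact hvc h.symm
    · exact hdisj (Walk.start_mem_support _) h
  have hc1 := key u1 m1
  have hc2 := key u2 m2
  have hcW : c ∉ (((treePath hT c u1).dropUntil v m1).reverse.append
      ((treePath hT c u2).dropUntil v m2)).support := by
    rw [Walk.support_append]
    intro h
    rcases List.mem_append.mp h with h | h
    · rw [Walk.support_reverse, List.mem_reverse] at h; exact hc1 h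
    · exact hc2 (List.tail_subset _ h)
  have hbp := (((treePath hT c u1).dropUntil v m1).reverse.append
      ((treePath hT c u2).dropUntil v m2)).bypass_isPath
  have hcmem := center_mem hT huniq h1 h2 hne hbp
  exact hcW (Walk.support_bypass_subset _ hcmem)

end StarlikeAux

open StarlikeAux SimpleGraph in
/-- If `T` is a starlike tree on `n` vertices with maximum degree `Δ ≥ 3` (i.e. exactly one
vertex of `T` has degree greater than 2, and that vertex has degree `Δ`), then
`TW(T) = (n - 1)(Δ - 1)`. -/
theorem terminal_wiener_index_starlike {V : Type*} [Fintype V] (T : SimpleGraph V)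
    [DecidableRel T.Adj] (hT : T.IsTree) (hΔ : 3 ≤ T.maxDegree)
    (hstar : ∃! v : V, 2 < T.degree v) :
    terminalWienerIndex T = (Fintype.card V - 1) * (T.maxDegree - 1) := by
  classical
  obtain ⟨c, hc2, huniq⟩ := hstar
  have hne : Nonempty V := ⟨c⟩
  obtain ⟨w₀, hw₀⟩ := T.exists_maximal_degree_vertex
  have hΔc : T.maxDegree = T.degree c := by
    have : w₀ = c := huniq w₀ (by omega)
    rw [hw₀, this]
  have hdeg2 : ∀ v : V, v ≠ c → T.degree v ≤ 2 := by
    intro v hv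
    by_contra h
    push_neg at h
    exact hv (huniq v h)
  have hdeg1 : ∀ v : V, v ≠ c → 1 ≤ T.degree v := by
    intro v hv
    obtain ⟨W⟩ := hT.isConnected v c
    obtain ⟨x, hx, -, -⟩ := SimpleGraph.Walk.exists_eq_cons_of_ne hv W
    have := (T.degree_pos_iff_exists_adj v).2 ⟨x, hx⟩
    omega
  have hmemL : ∀ u, u ∈ pendentFinset T ↔ T.degree u = 1 := by
    intro u; simp [pendentFinset]
  have hcL : c ∉ pendentFinset T := by
    intro h
    have := (hmemL c).1 h
    omega
  set L := pendentFinset T with hLdef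
  -- fiber sets
  set F : V → Finset V := fun u => ((treePath hT c u).support.toFinset).erase c with hF
  have hFcard : ∀ u, (F u).card = T.dist c u := by
    intro u
    have hp := treePath_isPath hT c u
    rw [hF]
    simp only
    rw [Finset.card_erase_of_mem (List.mem_toFinset.2 (SimpleGraph.Walk.start_mem_support _)),
      List.toFinset_card_of_nodup hp.support_nodup, SimpleGraph.Walk.length_support,
      path_length_eq_dist hT _ hp, Nat.add_sub_cancel]
  have hbiUnion : L.biUnion F = univ.erase c := by
    ext v
    simp only [Finset.mem_biUnion, Finset.mem_erase, Finset.mem_univ, and_true]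
    constructor
    · rintro ⟨u, hu, hvF⟩
      rw [hF] at hvF
      exact (Finset.mem_erase.mp hvF).1
    · intro hvc
      obtain ⟨u, hu1, hmem⟩ := exists_leaf_through hT hdeg2 hdeg1 (Fintype.card V) v hvc
        (Nat.sub_le _ _)
      exact ⟨u, (hmemL u).2 hu1, Finset.mem_erase.2 ⟨hvc, List.mem_toFinset.2 hmem⟩⟩
  have hS : ∑ u ∈ L, T.dist c u = Fintype.card V - 1 := by
    have hcb : (L.biUnion F).card = ∑ u ∈ L, (F u).card := by
      refine Finset.card_biUnion ?_
      intro u1 h1 u2 h2 hne12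
      rw [Function.onFun, Finset.disjoint_left]
      intro v hv1 hv2
      rw [hF] at hv1 hv2
      simp only [Finset.mem_erase, List.mem_toFinset] at hv1 hv2
      exact hne12 (leaf_unique hT huniq hv1.1 ((hmemL u1).1 h1) ((hmemL u2).1 h2) hv1.2 hv2.2)
    calc ∑ u ∈ L, T.dist c u = ∑ u ∈ L, (F u).card :=
          Finset.sum_congr rfl (fun u _ => (hFcard u).symm)
      _ = (L.biUnion F).card := hcb.symm
      _ = (univ.erase c).card := by rw [hbiUnion]
      _ = Fintype.card V - 1 := by
          rw [Finset.card_erase_of_mem (Finset.mem_univ c), Finset.card_univ]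
  -- handshake: card L = degree c
  have hedges : ∑ v, T.degree v = 2 * (Fintype.card V - 1) := by
    rw [T.sum_degrees_eq_twice_card_edges]
    have := hT.card_edgeFinset
    omega
  have hLsub : L ⊆ univ.erase c := by
    intro u hu
    refine Finset.mem_erase.2 ⟨?_, Finset.mem_univ u⟩
    rintro rfl
    exact hcL hu
  have hsplit : ∑ v, T.degree v = T.degree c + ∑ v ∈ univ.erase c, T.degree v :=
    (Finset.add_sum_erase univ _ (Finset.mem_univ c)).symm
  have hsum2 : ∑ v ∈ univ.erase c, T.degree v
      = 2 * ((univ.erase c).card - L.card) + L.card := by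
    rw [← Finset.sum_sdiff hLsub]
    have e1 : ∑ v ∈ L, T.degree v = L.card := by
      rw [Finset.sum_congr rfl (fun u hu => (hmemL u).1 hu)]
      simp
    have e2 : ∑ v ∈ (univ.erase c) \ L, T.degree v = 2 * ((univ.erase c).card - L.card) := by
      have hall : ∀ v ∈ (univ.erase c) \ L, T.degree v = 2 := by
        intro v hv
        rw [Finset.mem_sdiff, Finset.mem_erase] at hv
        have h1 := hdeg2 v hv.1.1
        have h2 := hdeg1 v hv.1.1
        have h3 : ¬ T.degree v = 1 := fun h => hv.2 ((hmemL v).2 h)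
        omega
      rw [Finset.sum_congr rfl hall, Finset.sum_const, smul_eq_mul,
        Finset.card_sdiff_of_subset hLsub, mul_comm]
    rw [e1, e2]
  have hLc : L.card = T.degree c := by
    have hec : (univ.erase c).card = Fintype.card V - 1 := by
      rw [Finset.card_erase_of_mem (Finset.mem_univ c), Finset.card_univ]
    have hLle : L.card ≤ (univ.erase c).card := Finset.card_le_card hLsub
    have h1 : 1 ≤ Fintype.card V := Fintype.card_pos
    rw [hec] at hsum2 hLle
    omega
  -- distance additivity for leaves
  have hdistadd : ∀ u ∈ L, ∀ v ∈ L, u ≠ v → T.dist u v = T.dist u c + T.dist c v := by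
    intro u hu v hv huv
    have hp := treePath_isPath hT u v
    have hcm := center_mem hT huniq ((hmemL u).1 hu) ((hmemL v).1 hv) huv hp
    exact (dist_add_of_mem hT hp hcm).symm
  -- per-u identity
  have hper : ∀ u ∈ L, (∑ v ∈ L, T.dist u v) + 2 * T.dist c u
      = ∑ v ∈ L, (T.dist u c + T.dist c v) := by
    intro u hu
    have h1 : ∑ v ∈ L, T.dist u v = ∑ v ∈ L.erase u, (T.dist u c + T.dist c v) := by
      calc ∑ v ∈ L, T.dist u v = T.dist u u + ∑ v ∈ L.erase u, T.dist u v :=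
            (Finset.add_sum_erase L _ hu).symm
        _ = ∑ v ∈ L.erase u, T.dist u v := by rw [SimpleGraph.dist_self, zero_add]
        _ = ∑ v ∈ L.erase u, (T.dist u c + T.dist c v) :=
            Finset.sum_congr rfl (fun v hv => hdistadd u hu v (Finset.mem_of_mem_erase hv)
              (fun h => Finset.ne_of_mem_erase hv h.symm))
    have h2 : ∑ v ∈ L, (T.dist u c + T.dist c v)
        = (T.dist u c + T.dist c u) + ∑ v ∈ L.erase u, (T.dist u c + T.dist c v) :=
      (Finset.add_sum_erase L _ hu).symm
    rw [h1, h2, SimpleGraph.dist_comm (u := u) (v := c)]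
    omega
  -- sum over u
  have htot : (∑ u ∈ L, ∑ v ∈ L, T.dist u v) + 2 * (Fintype.card V - 1)
      = 2 * (L.card * (Fintype.card V - 1)) := by
    have hsumall : ∑ u ∈ L, ((∑ v ∈ L, T.dist u v) + 2 * T.dist c u)
        = ∑ u ∈ L, ∑ v ∈ L, (T.dist u c + T.dist c v) :=
      Finset.sum_congr rfl hper
    rw [Finset.sum_add_distrib, ← Finset.mul_sum, hS] at hsumall
    have hrhs : ∑ u ∈ L, ∑ v ∈ L, (T.dist u c + T.dist c v)
        = 2 * (L.card * (Fintype.card V - 1)) := by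
      have : ∀ u ∈ L, ∑ v ∈ L, (T.dist u c + T.dist c v)
          = L.card * T.dist c u + (Fintype.card V - 1) := by
        intro u hu
        rw [Finset.sum_add_distrib, Finset.sum_const, smul_eq_mul, hS,
          SimpleGraph.dist_comm (u := u) (v := c)]
      rw [Finset.sum_congr rfl this, Finset.sum_add_distrib, Finset.sum_const,
        smul_eq_mul, ← Finset.mul_sum, hS]
      ring
    rw [hrhs] at hsumall
    exact hsumall
  -- conclude
  have hm3 : 3 ≤ L.card := by omega
  obtain ⟨m', hm'⟩ : ∃ m', L.card = m' + 1 := ⟨L.card - 1, by omega⟩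
  have htot' : ∑ u ∈ L, ∑ v ∈ L, T.dist u v
      = 2 * ((L.card - 1) * (Fintype.card V - 1)) := by
    rw [hm'] at htot ⊢
    have hexp : 2 * ((m' + 1) * (Fintype.card V - 1))
        = 2 * (m' * (Fintype.card V - 1)) + 2 * (Fintype.card V - 1) := by ring
    rw [hexp] at htot
    have := Nat.add_right_cancel htot
    simpa using this
  rw [terminalWienerIndex, ← hLdef, htot', Nat.mul_div_cancel_left _ (by norm_num)]
  rw [hΔc, ← hLc, Nat.mul_comm]
end

section
/- Let T be a tree on n vertices with maximum degree Δ ≥ 3 such that TW(T) = (n-1)(Δ-1). Then T is starlike, i.e., exactly one vertex of T has degree greater than 2 (and that vertex has degree Δ). -/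
open Finset

set_option linter.unusedSectionVars false

namespace TWaux

open SimpleGraph Walk

variable {V : Type*} [Fintype V] {G : SimpleGraph V}

lemma bridge_not_reachable (hT : G.IsTree) {a b : V} (hab : G.Adj a b) :
    ¬ (G.deleteEdges {s(a, b)}).Reachable a b :=
  (isBridge_iff).mp ((isAcyclic_iff_forall_adj_isBridge.mp hT.2) hab)

lemma cover (hT : G.IsTree) {a b : V} (hab : G.Adj a b) (x : V) :
    (G.deleteEdges {s(a, b)}).Reachable a x ∨ (G.deleteEdges {s(a, b)}).Reachable b x := by
  have key : ∀ {y z : V} (_ : G.Walk y z),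
      ((G.deleteEdges {s(a, b)}).Reachable a y ∨ (G.deleteEdges {s(a, b)}).Reachable b y) →
      ((G.deleteEdges {s(a, b)}).Reachable a z ∨ (G.deleteEdges {s(a, b)}).Reachable b z) := by
    intro y z w
    induction w with
    | nil => exact id
    | @cons y c z h p ih =>
      intro hy
      apply ih
      by_cases he : s(y, c) = s(a, b)
      · rw [Sym2.eq_iff] at he
        rcases he with ⟨rfl, rfl⟩ | ⟨rfl, rfl⟩
        · exact Or.inr (Reachable.refl _)
        · exact Or.inl (Reachable.refl _)
      · have hadj : (G.deleteEdges {s(a, b)}).Adj y c :=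
          deleteEdges_adj.mpr ⟨h, by simpa using he⟩
        rcases hy with h1 | h1
        · exact Or.inl (h1.trans hadj.reachable)
        · exact Or.inr (h1.trans hadj.reachable)
  obtain ⟨w⟩ := hT.isConnected.preconnected a x
  exact key w (Or.inl (Reachable.refl _))

lemma step (hT : G.IsTree) {a b c x : V} (hab : G.Adj a b) (hac : G.Adj a c) (hcb : c ≠ b)
    (hx : (G.deleteEdges {s(c, a)}).Reachable c x) :
    (G.deleteEdges {s(a, b)}).Reachable a x := by
  classical
  obtain ⟨w0⟩ := hx
  let p := w0.toPath
  have hGsub : ∀ e ∈ (p : (G.deleteEdges {s(c, a)}).Walk c x).edges, e ∈ G.edgeSet := fun e he =>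
    edgeSet_mono (deleteEdges_le _) ((p : (G.deleteEdges {s(c, a)}).Walk c x).edges_subset_edgeSet he)
  have hasup : a ∉ (p : (G.deleteEdges {s(c, a)}).Walk c x).support := by
    intro ha
    set q := (p : (G.deleteEdges {s(c, a)}).Walk c x).takeUntil a ha with hqdef
    have hq : q.IsPath := p.2.takeUntil ha
    have hqsub : ∀ e ∈ q.edges, e ∈ G.edgeSet := fun e he =>
      hGsub e ((p : (G.deleteEdges {s(c, a)}).Walk c x).edges_takeUntil_subset ha he)
    have hq' : (q.transfer G hqsub).IsPath := hq.transfer _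
    have huniq := (hT.existsUnique_path c a).unique hq' (Path.singleton hac.symm).2
    have hedge : s(c, a) ∈ q.edges := by
      have h1 : s(c, a) ∈ (q.transfer G hqsub).edges := by
        rw [huniq]
        simp [Path.singleton]
      rwa [Walk.edges_transfer] at h1
    have h2 : s(c, a) ∈ (G.deleteEdges {s(c, a)}).edgeSet := q.edges_subset_edgeSet hedge
    rw [edgeSet_deleteEdges] at h2
    simp at h2
  have hab_not : s(a, b) ∉ (p : (G.deleteEdges {s(c, a)}).Walk c x).edges := fun h =>
    hasup (Walk.fst_mem_support_of_mem_edges _ h)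
  let p2 := ((p : (G.deleteEdges {s(c, a)}).Walk c x).transfer G hGsub).toDeleteEdges {s(a, b)}
    (by
      rw [Walk.edges_transfer]
      intro e he hmem
      rw [Set.mem_singleton_iff] at hmem
      subst hmem
      exact hab_not he)
  have hadj2 : (G.deleteEdges {s(a, b)}).Adj a c := by
    rw [deleteEdges_adj]
    refine ⟨hac, ?_⟩
    rw [Set.mem_singleton_iff, Sym2.congr_right]
    exact hcb
  exact hadj2.reachable.trans p2.reachable

open scoped Classical in
noncomputable def side (G : SimpleGraph V) (e : Sym2 V) (a : V) : Finset V :=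
  univ.filter fun x => (G.deleteEdges {e}).Reachable a x

lemma mem_side {e : Sym2 V} {a x : V} :
    x ∈ side G e a ↔ (G.deleteEdges {e}).Reachable a x := by
  classical
  simp [side]

lemma exists_leaf_side [DecidableRel G.Adj] (hT : G.IsTree) :
    ∀ (n : ℕ) {a b : V}, G.Adj a b → (side G s(a, b) a).card ≤ n →
    ∃ u, G.degree u = 1 ∧ (G.deleteEdges {s(a, b)}).Reachable a u := by
  intro n
  induction n with
  | zero =>
    intro a b hab hc
    exfalso
    have : a ∈ side G s(a, b) a := mem_side.mpr (Reachable.refl _)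
    have := Finset.card_pos.mpr ⟨a, this⟩
    omega
  | succ n ih =>
    intro a b hab hc
    by_cases hdeg : G.degree a = 1
    · exact ⟨a, hdeg, Reachable.refl _⟩
    · have hb : b ∈ G.neighborFinset a := by simpa using hab
      have h1 : 1 < (G.neighborFinset a).card := by
        have h0 : 0 < (G.neighborFinset a).card := Finset.card_pos.mpr ⟨b, hb⟩
        have : G.degree a = (G.neighborFinset a).card := rfl
        omega
      obtain ⟨c, hc', hcb⟩ := Finset.exists_mem_ne h1 b
      have hac : G.Adj a c := by simpa using hc'
      have hsub : side G s(c, a) c ⊆ side G s(a, b) a := fun x hx =>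
        mem_side.mpr (step hT hab hac hcb (mem_side.mp hx))
      have hlt : (side G s(c, a) c).card < (side G s(a, b) a).card := by
        apply Finset.card_lt_card
        refine ⟨hsub, fun hss => ?_⟩
        have ha1 : a ∈ side G s(a, b) a := mem_side.mpr (Reachable.refl _)
        have := mem_side.mp (hss ha1)
        exact bridge_not_reachable hT hac.symm this
      obtain ⟨u, hu1, hu2⟩ := ih hac.symm (by omega)
      exact ⟨u, hu1, step hT hab hac hcb hu2⟩

end TWaux

namespace TWaux
open Finset SimpleGraph Walk
variable {V : Type*} [Fintype V] {G : SimpleGraph V}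

open scoped Classical in
lemma dist_eq_card_sep [DecidableRel G.Adj] (hT : G.IsTree) (u w : V) :
    G.dist u w
      = (G.edgeFinset.filter fun e => ¬ (G.deleteEdges {e}).Reachable u w).card := by
  classical
  obtain ⟨p, hp, hlen⟩ := hT.isConnected.exists_path_of_dist u w
  have hset : (G.edgeFinset.filter fun e => ¬ (G.deleteEdges {e}).Reachable u w)
      = p.edges.toFinset := by
    ext e
    simp only [mem_filter, mem_edgeFinset, List.mem_toFinset]
    constructor
    · rintro ⟨heG, hsep⟩
      by_contra hne
      exact hsep (p.toDeleteEdge e hne).reachable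
    · intro he
      refine ⟨p.edges_subset_edgeSet he, ?_⟩
      intro hreach
      obtain ⟨q0⟩ := hreach
      set q := q0.toPath with hqdef
      have hqsub : ∀ f ∈ (q : (G.deleteEdges {e}).Walk u w).edges, f ∈ G.edgeSet := fun f hf =>
        edgeSet_mono (deleteEdges_le _)
          ((q : (G.deleteEdges {e}).Walk u w).edges_subset_edgeSet hf)
    -- transfer q to G and use uniqueness
      have hq' : ((q : (G.deleteEdges {e}).Walk u w).transfer G hqsub).IsPath :=
        q.2.transfer _
      have huniq := (hT.existsUnique_path u w).unique hp hq'
      have he' : e ∈ ((q : (G.deleteEdges {e}).Walk u w).transfer G hqsub).edges := by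
        rw [← huniq]; exact he
      rw [Walk.edges_transfer] at he'
      have h2 : e ∈ (G.deleteEdges {e}).edgeSet :=
        (q : (G.deleteEdges {e}).Walk u w).edges_subset_edgeSet he'
      rw [edgeSet_deleteEdges] at h2
      simp at h2
  rw [hset, List.toFinset_card_of_nodup hp.edges_nodup, Walk.length_edges]
  exact hlen.symm

open scoped Classical in
lemma per_edge [DecidableRel G.Adj] (hT : G.IsTree) {e : Sym2 V} (he : e ∈ G.edgeSet) :
    2 * ((pendentFinset G).card - 1)
      ≤ ∑ u ∈ pendentFinset G, ∑ w ∈ pendentFinset G,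
          if ¬ (G.deleteEdges {e}).Reachable u w then 1 else 0 := by
  classical
  induction e using Sym2.ind with
  | _ a b =>
  rw [SimpleGraph.mem_edgeSet] at he
  rename' he => hab
  have hBiff : ∀ x, ¬ (G.deleteEdges {s(a, b)}).Reachable a x ↔
      (G.deleteEdges {s(a, b)}).Reachable b x := by
    intro x
    constructor
    · intro h
      exact (cover hT hab x).resolve_left h
    · intro hbx hax
      exact bridge_not_reachable hT hab (hax.trans hbx.symm)
  set A := (pendentFinset G).filter (fun x => (G.deleteEdges {s(a, b)}).Reachable a x) with hA
  set B := (pendentFinset G).filter (fun x => ¬ (G.deleteEdges {s(a, b)}).Reachable a x) with hB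
  have hsplit : A.card + B.card = (pendentFinset G).card := card_filter_add_card_filter_not _
  have hcnt : ∀ (q : V → Prop) [DecidablePred q],
      (∑ w ∈ pendentFinset G, if q w then 1 else 0) = ((pendentFinset G).filter q).card := by
    intro q _
    rw [Finset.sum_ite, Finset.sum_const, Finset.sum_const]
    simp
  have hA1 : 1 ≤ A.card := by
    obtain ⟨u, hu1, hu2⟩ := exists_leaf_side hT (side G s(a, b) a).card hab le_rfl
    refine Finset.card_pos.mpr ⟨u, ?_⟩
    rw [hA, mem_filter]
    exact ⟨by simp [pendentFinset, hu1], hu2⟩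
  have hB1 : 1 ≤ B.card := by
    obtain ⟨u, hu1, hu2⟩ := exists_leaf_side hT (side G s(b, a) b).card hab.symm le_rfl
    rw [Sym2.eq_swap] at hu2
    refine Finset.card_pos.mpr ⟨u, ?_⟩
    rw [hB, mem_filter]
    exact ⟨by simp [pendentFinset, hu1], (hBiff u).mpr hu2⟩
  have hrowA : ∀ u ∈ A, (∑ w ∈ pendentFinset G, if ¬ (G.deleteEdges {s(a, b)}).Reachable u w then 1 else 0)
      = B.card := by
    intro u hu
    rw [hA, mem_filter] at hu
    rw [hcnt]
    congr 1
    apply Finset.filter_congr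
    intro w _
    constructor
    · intro h hraw
      exact h (hu.2.symm.trans hraw)
    · intro h hruw
      exact h (hu.2.trans hruw)
  have hrowB : ∀ u ∈ B, (∑ w ∈ pendentFinset G, if ¬ (G.deleteEdges {s(a, b)}).Reachable u w then 1 else 0)
      = A.card := by
    intro u hu
    rw [hB, mem_filter] at hu
    have hbu : (G.deleteEdges {s(a, b)}).Reachable b u := (hBiff u).mp hu.2
    rw [hcnt]
    congr 1
    apply Finset.filter_congr
    intro w _
    constructor
    · intro h
      by_contra haw
      have hbw := (hBiff w).mp haw
      exact h (hbu.symm.trans hbw)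
    · intro haw hruw
      exact hu.2 (haw.trans hruw.symm)
  have htot : (∑ u ∈ pendentFinset G, ∑ w ∈ pendentFinset G, if ¬ (G.deleteEdges {s(a, b)}).Reachable u w then 1 else 0)
      = A.card * B.card + B.card * A.card := by
    rw [← Finset.sum_filter_add_sum_filter_not (pendentFinset G)
      (fun x => (G.deleteEdges {s(a, b)}).Reachable a x)]
    rw [Finset.sum_congr rfl hrowA, Finset.sum_congr rfl hrowB]
    rw [Finset.sum_const, Finset.sum_const, smul_eq_mul, smul_eq_mul]
  rw [htot]
  obtain ⟨x, hx⟩ : ∃ x, A.card = x + 1 := ⟨A.card - 1, by omega⟩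
  obtain ⟨y, hy⟩ : ∃ y, B.card = y + 1 := ⟨B.card - 1, by omega⟩
  rw [hx, hy, ← hsplit, hx, hy]
  have h2 : x + 1 + (y + 1) - 1 = x + y + 1 := by omega
  rw [h2]
  nlinarith

end TWaux

namespace TWaux
open Finset SimpleGraph Walk
variable {V : Type*} [Fintype V] {G : SimpleGraph V}
set_option linter.unusedSectionVars false

lemma degree_pos (hT : G.IsTree) (hn : 1 < Fintype.card V) [DecidableRel G.Adj] (x : V) :
    0 < G.degree x := by
  have : Nontrivial V := Fintype.one_lt_card_iff_nontrivial.mp hn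
  obtain ⟨y, hy⟩ := exists_ne x
  obtain ⟨w⟩ := hT.isConnected.preconnected x y
  cases w with
  | nil => exact absurd rfl hy.symm
  | cons h _ =>
    rw [G.degree_pos_iff_exists_adj]
    exact ⟨_, h⟩

lemma leaf_count [DecidableRel G.Adj] (hT : G.IsTree) {u v : V} (huv : u ≠ v)
    (hu : 3 ≤ G.degree u) (hv : 3 ≤ G.degree v) :
    G.degree u + 1 ≤ (pendentFinset G).card := by
  classical
  have hn : 1 < Fintype.card V := Fintype.one_lt_card_iff_nontrivial.mpr ⟨u, v, huv⟩
  have hdegpos : ∀ x : V, 0 < G.degree x := degree_pos hT hn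
  have hsum := G.sum_degrees_eq_twice_card_edges
  have hcard := hT.card_edgeFinset
  set Q := univ.filter (fun x : V => ¬ G.degree x = 1) with hQ
  have hsplit : (pendentFinset G).card + Q.card = Fintype.card V := by
    rw [← Finset.card_univ]
    exact card_filter_add_card_filter_not _
  have husum : ∑ x ∈ univ, G.degree x
      = ∑ x ∈ pendentFinset G, G.degree x + ∑ x ∈ Q, G.degree x :=
    (Finset.sum_filter_add_sum_filter_not univ _ _).symm
  have hPsum : ∑ x ∈ pendentFinset G, G.degree x = (pendentFinset G).card := by
    calc ∑ x ∈ pendentFinset G, G.degree x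
        = ∑ _x ∈ pendentFinset G, 1 :=
          Finset.sum_congr rfl (fun x hx => by simpa [pendentFinset] using hx)
      _ = (pendentFinset G).card := by simp
  have huQ : u ∈ Q := by rw [hQ, mem_filter]; exact ⟨mem_univ _, by omega⟩
  have hvQ : v ∈ Q := by rw [hQ, mem_filter]; exact ⟨mem_univ _, by omega⟩
  have hvQ' : v ∈ Q.erase u := Finset.mem_erase.mpr ⟨huv.symm, hvQ⟩
  have hQ2 : 2 ≤ Q.card := by
    have := Finset.card_pos.mpr ⟨v, hvQ'⟩
    have := Finset.card_erase_of_mem huQ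
    omega
  have hQsum : G.degree u + 3 + 2 * (Q.card - 2) ≤ ∑ x ∈ Q, G.degree x := by
    rw [← Finset.add_sum_erase _ _ huQ, ← Finset.add_sum_erase _ _ hvQ']
    have hrest : 2 * (Q.card - 2) ≤ ∑ x ∈ (Q.erase u).erase v, G.degree x := by
      have hb : ∀ x ∈ (Q.erase u).erase v, 2 ≤ G.degree x := by
        intro x hx
        have hxQ : x ∈ Q := Finset.mem_of_mem_erase (Finset.mem_of_mem_erase hx)
        rw [hQ, mem_filter] at hxQ
        have := hdegpos x
        omega
      have := Finset.card_nsmul_le_sum _ _ 2 hb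
      rw [Finset.card_erase_of_mem hvQ', Finset.card_erase_of_mem huQ] at this
      rw [show Q.card - 2 = Q.card - 1 - 1 by omega]
      simpa [mul_comm] using this
    omega
  have hEdge : 2 * G.edgeFinset.card + 2 = 2 * Fintype.card V := by omega
  omega

end TWaux

open Finset TWaux in
/-- If `T` is a tree on `n` vertices with maximum degree `Δ ≥ 3` such that
`TW(T) = (n - 1)(Δ - 1)`, then `T` is starlike: exactly one vertex of `T` has degree greater
than 2, and that vertex has degree `Δ`. -/
theorem starlike_of_terminal_wiener_index_eq {V : Type*} [Fintype V] (T : SimpleGraph V)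
    [DecidableRel T.Adj] (hT : T.IsTree) (hΔ : 3 ≤ T.maxDegree)
    (heq : terminalWienerIndex T = (Fintype.card V - 1) * (T.maxDegree - 1)) :
    ∃ v : V, T.degree v = T.maxDegree ∧ 2 < T.degree v ∧ ∀ u : V, 2 < T.degree u → u = v := by
  classical
  have hne : Nonempty V := hT.isConnected.nonempty
  obtain ⟨v, hv⟩ := T.exists_maximal_degree_vertex
  refine ⟨v, hv.symm, by omega, ?_⟩
  intro u hu
  by_contra huv
  -- lower bound on the number of pendent vertices
  have hp_ge : T.degree v + 1 ≤ (pendentFinset T).card :=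
    leaf_count hT (fun h => huv h.symm) (by omega) (by omega)
  -- upper bound via the terminal Wiener index
  have hsum2 : ∑ x ∈ pendentFinset T, ∑ w ∈ pendentFinset T, T.dist x w
      = ∑ e ∈ T.edgeFinset, ∑ x ∈ pendentFinset T, ∑ w ∈ pendentFinset T,
          if ¬ (T.deleteEdges {e}).Reachable x w then 1 else 0 := by
    have h1 : ∀ x w : V, T.dist x w
        = ∑ e ∈ T.edgeFinset, (if ¬ (T.deleteEdges {e}).Reachable x w then 1 else 0) := by
      intro x w
      rw [dist_eq_card_sep hT, Finset.card_filter]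
    calc ∑ x ∈ pendentFinset T, ∑ w ∈ pendentFinset T, T.dist x w
        = ∑ x ∈ pendentFinset T, ∑ w ∈ pendentFinset T, ∑ e ∈ T.edgeFinset,
            (if ¬ (T.deleteEdges {e}).Reachable x w then 1 else 0) := by
          exact Finset.sum_congr rfl fun x _ => Finset.sum_congr rfl fun w _ => h1 x w
      _ = ∑ x ∈ pendentFinset T, ∑ e ∈ T.edgeFinset, ∑ w ∈ pendentFinset T,
            (if ¬ (T.deleteEdges {e}).Reachable x w then 1 else 0) :=
          Finset.sum_congr rfl fun x _ => Finset.sum_comm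
      _ = ∑ e ∈ T.edgeFinset, ∑ x ∈ pendentFinset T, ∑ w ∈ pendentFinset T,
            (if ¬ (T.deleteEdges {e}).Reachable x w then 1 else 0) :=
          Finset.sum_comm
  have hlower : T.edgeFinset.card * (2 * ((pendentFinset T).card - 1))
      ≤ ∑ x ∈ pendentFinset T, ∑ w ∈ pendentFinset T, T.dist x w := by
    rw [hsum2]
    have := Finset.card_nsmul_le_sum T.edgeFinset
      (fun e => ∑ x ∈ pendentFinset T, ∑ w ∈ pendentFinset T,
          if ¬ (T.deleteEdges {e}).Reachable x w then 1 else 0)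
      (2 * ((pendentFinset T).card - 1))
      (fun e he => per_edge hT (SimpleGraph.mem_edgeFinset.mp he))
    simpa [smul_eq_mul] using this
  have hcard := hT.card_edgeFinset
  have hn2 : 2 ≤ Fintype.card V :=
    Fintype.one_lt_card_iff_nontrivial.mpr ⟨u, v, fun h => huv h⟩
  have hm : T.edgeFinset.card = Fintype.card V - 1 := by omega
  have hdiv : (Fintype.card V - 1) * ((pendentFinset T).card - 1) ≤ terminalWienerIndex T := by
    rw [terminalWienerIndex, Nat.le_div_iff_mul_le (by norm_num : 0 < 2)]
    calc (Fintype.card V - 1) * ((pendentFinset T).card - 1) * 2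
        = (Fintype.card V - 1) * (2 * ((pendentFinset T).card - 1)) := by ring
      _ ≤ _ := by rw [← hm]; exact hlower
  rw [heq] at hdiv
  have hfac : (pendentFinset T).card - 1 ≤ T.maxDegree - 1 :=
    Nat.le_of_mul_le_mul_left hdiv (by omega)
  omega
end
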